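/- arXiv:2307.10909 — 5 statements merged into one kernel-verified Lean document; each statement's English description precedes it below -/
import Mathlib

section
/- For 0 ≤ t ≤ 1, set t' = √(1−t²) and ε₀ = (1/(2π))·arcsinh(t'/t) (with ε₀ = +∞ if t = 0). Then for all real ε, ∫₀¹ log| √(1 − t² sin²(2π(θ + iε))) | dθ = log((1+t')/2) + 2π·max{0, |ε| − ε₀}. -/
open Real Complex MeasureTheory intervalIntegral

noncomputable def Complex.abs : AbsoluteValue ℂ ℝ := NormedField.toAbsoluteValue ℂ

namespace Complex
lemma abs_eq_norm' (z : ℂ) : Complex.abs z = ‖z‖ := rfl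
lemma norm_eq_abs (z : ℂ) : ‖z‖ = Complex.abs z := rfl
lemma abs_exp (z : ℂ) : Complex.abs (exp z) = Real.exp z.re := norm_exp z
lemma abs_apply (z : ℂ) : Complex.abs z = Real.sqrt (normSq z) := norm_def z
lemma continuous_abs : Continuous Complex.abs := continuous_norm
lemma abs_ofReal (r : ℝ) : Complex.abs (r : ℂ) = |r| := by
  show ‖(r : ℂ)‖ = |r|; simp
lemma abs_conj (z : ℂ) : Complex.abs ((starRingEnd ℂ) z) = Complex.abs z := norm_conj z
lemma re_le_abs (z : ℂ) : z.re ≤ Complex.abs z := re_le_norm z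
lemma normSq_eq_abs (z : ℂ) : normSq z = Complex.abs z ^ 2 := normSq_eq_norm_sq z
lemma abs_mul_exp_arg_mul_I (z : ℂ) : (Complex.abs z : ℂ) * exp (arg z * I) = z :=
  norm_mul_exp_arg_mul_I z
end Complex

noncomputable def ee (θ : ℝ) : ℂ := Complex.exp (2 * Real.pi * Complex.I * θ)

lemma ee_apply (θ : ℝ) : ee θ = Complex.exp (2 * Real.pi * Complex.I * θ) := rfl

lemma ee_ne (θ : ℝ) : ee θ ≠ 0 := Complex.exp_ne_zero _

lemma abs_ee (θ : ℝ) : Complex.abs (ee θ) = 1 := by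
  rw [ee_apply, Complex.abs_exp]
  have : (2 * Real.pi * Complex.I * θ).re = 0 := by
    simp [Complex.mul_re]
  rw [this, Real.exp_zero]

lemma continuous_ee : Continuous ee := by
  unfold ee; fun_prop

lemma ee_add (a b : ℝ) : ee (a + b) = ee a * ee b := by
  rw [ee_apply, ee_apply, ee_apply, ← Complex.exp_add]
  push_cast
  ring_nf

lemma ee_periodic : Function.Periodic ee 1 := by
  intro x
  rw [ee_add]
  have : ee 1 = 1 := by
    rw [ee_apply]
    push_cast
    rw [show 2 * (Real.pi:ℂ) * Complex.I * 1 = 2 * (Real.pi:ℂ) * Complex.I by ring,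
      Complex.exp_two_pi_mul_I]
  rw [this, mul_one]

lemma ee_half : ee (1/2) = -1 := by
  rw [ee_apply]
  push_cast
  rw [show 2 * (Real.pi:ℂ) * Complex.I * (1/2 : ℂ) = (Real.pi:ℂ) * Complex.I by ring,
    Complex.exp_pi_mul_I]

lemma intervalIntegrable_log01 : IntervalIntegrable Real.log volume 0 1 := by
  have hmaj : IntervalIntegrable (fun x : ℝ => 2 * x ^ (-(1/2) : ℝ)) volume 0 1 :=
    (intervalIntegral.intervalIntegrable_rpow' (by norm_num)).const_mul 2
  apply hmaj.mono_fun Real.measurable_log.aestronglyMeasurable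
  rw [Filter.EventuallyLE, ae_restrict_iff' measurableSet_uIoc]
  refine Filter.Eventually.of_forall fun x hx => ?_
  rw [Set.uIoc_of_le (by norm_num : (0:ℝ) ≤ 1)] at hx
  obtain ⟨h0, h1⟩ := hx
  have hrp : 0 < x ^ (-(1/2) : ℝ) := Real.rpow_pos_of_pos h0 _
  have hlog : Real.log x ≤ 0 := Real.log_nonpos h0.le h1
  have key : -Real.log x ≤ 2 * x ^ (-(1/2) : ℝ) := by
    have h2 : Real.log (x ^ (-(1/2) : ℝ)) = -(1/2) * Real.log x := Real.log_rpow h0 _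
    have h3 : Real.log (x ^ (-(1/2) : ℝ)) ≤ x ^ (-(1/2) : ℝ) - 1 :=
      Real.log_le_sub_one_of_pos hrp
    nlinarith
  simp only [Real.norm_eq_abs]
  rw [_root_.abs_of_nonpos hlog, _root_.abs_of_nonneg (by positivity)]
  exact key

lemma abs_ee_sub_one (θ : ℝ) : Complex.abs (ee θ - 1) = 2 * |Real.sin (Real.pi * θ)| := by
  have h : ee θ = Complex.exp ((2 * Real.pi * θ : ℝ) * Complex.I) := by
    rw [ee_apply]; push_cast; ring_nf
  rw [h, Complex.exp_mul_I]
  have : Complex.cos (2 * Real.pi * θ : ℝ) + Complex.sin (2 * Real.pi * θ : ℝ) * Complex.I - 1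
      = Complex.ofReal (Real.cos (2 * Real.pi * θ) - 1) +
        Complex.ofReal (Real.sin (2 * Real.pi * θ)) * Complex.I := by
    push_cast [Complex.ofReal_cos, Complex.ofReal_sin]; ring
  rw [this]
  rw [Complex.abs_apply, Complex.normSq_add_mul_I]
  have hcos : Real.cos (2 * Real.pi * θ) = 1 - 2 * Real.sin (Real.pi * θ) ^ 2 := by
    have h2 : Real.cos (2 * Real.pi * θ) = 2 * Real.cos (Real.pi * θ) ^ 2 - 1 := by
      have := Real.cos_two_mul (Real.pi * θ)
      rw [show 2 * (Real.pi * θ) = 2 * Real.pi * θ by ring] at this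
      exact this
    have h3 := Real.sin_sq_add_cos_sq (Real.pi * θ)
    nlinarith
  have hsin : Real.sin (2 * Real.pi * θ) = 2 * Real.sin (Real.pi * θ) * Real.cos (Real.pi * θ) := by
    have := Real.sin_two_mul (Real.pi * θ)
    rw [show 2 * (Real.pi * θ) = 2 * Real.pi * θ by ring] at this
    exact this
  have h3 := Real.sin_sq_add_cos_sq (Real.pi * θ)
  have hval : (Real.cos (2 * Real.pi * θ) - 1) ^ 2 + Real.sin (2 * Real.pi * θ) ^ 2
      = (2 * Real.sin (Real.pi * θ)) ^ 2 := by
    rw [hcos, hsin]; nlinarith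
  rw [hval, Real.sqrt_sq_eq_abs, abs_mul]
  norm_num


noncomputable def f1 (θ : ℝ) : ℝ := Real.log (Complex.abs (ee θ - 1))

lemma f1_meas : Measurable f1 :=
  Real.measurable_log.comp ((Complex.continuous_abs.comp
    (continuous_ee.sub continuous_const)).measurable)

lemma abslog_int_half : IntervalIntegrable (fun x : ℝ => Real.log 2 + |Real.log x|)
    volume 0 (1/2) := by
  refine IntervalIntegrable.add (intervalIntegrable_const) ?_
  exact (intervalIntegrable_log01.mono_set (by
    rw [Set.uIcc_of_le (by norm_num : (0:ℝ) ≤ 1/2), Set.uIcc_of_le (by norm_num : (0:ℝ) ≤ 1)]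
    exact Set.Icc_subset_Icc le_rfl (by norm_num))).norm

lemma f1_bound {x : ℝ} (h0 : 0 < x) (h1 : x ≤ 1/2) :
    |f1 x| ≤ Real.log 2 + |Real.log x| := by
  have hπ := Real.pi_pos
  have hsin : 2 * x ≤ Real.sin (Real.pi * x) := by
    have := Real.mul_le_sin (x := Real.pi * x) (by positivity) (by nlinarith)
    calc 2 * x = 2 / Real.pi * (Real.pi * x) := by field_simp
    _ ≤ _ := this
  have hsinpos : 0 < Real.sin (Real.pi * x) := lt_of_lt_of_le (by linarith) hsin
  have hsle : Real.sin (Real.pi * x) ≤ 1 := Real.sin_le_one _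
  have hf : f1 x = Real.log (2 * Real.sin (Real.pi * x)) := by
    rw [f1, abs_ee_sub_one, _root_.abs_of_nonneg hsinpos.le]
  rw [hf]
  have hub : Real.log (2 * Real.sin (Real.pi * x)) ≤ Real.log 2 := by
    have : 2 * Real.sin (Real.pi * x) ≤ 2 := by linarith
    calc Real.log (2 * Real.sin (Real.pi * x)) ≤ Real.log 2 := Real.log_le_log (by linarith) this
    _ ≤ _ := le_rfl
  have hlb : Real.log (2 * x) + Real.log 2 ≤ Real.log (2 * Real.sin (Real.pi * x)) := by
    have h4 : Real.log (2 * (2 * x)) ≤ Real.log (2 * Real.sin (Real.pi * x)) :=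
      Real.log_le_log (by linarith) (by linarith)
    have : Real.log (2 * (2 * x)) = Real.log 2 + Real.log (2 * x) := by
      rw [Real.log_mul (by norm_num) (by positivity)]
    linarith
  have hlogx : Real.log (2 * x) = Real.log 2 + Real.log x :=
    Real.log_mul (by norm_num) h0.ne'
  have hxneg : Real.log x ≤ 0 := Real.log_nonpos h0.le (by linarith)
  rw [abs_le]
  constructor
  · rw [_root_.abs_of_nonpos hxneg]; linarith [Real.log_nonneg (by norm_num : (1:ℝ) ≤ 2)]
  · linarith [abs_nonneg (Real.log x)]

lemma f1_symm (x : ℝ) : f1 (1 - x) = f1 x := by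
  rw [f1, f1, abs_ee_sub_one, abs_ee_sub_one]
  have : Real.sin (Real.pi * (1 - x)) = Real.sin (Real.pi * x) := by
    rw [show Real.pi * (1 - x) = Real.pi - Real.pi * x by ring, Real.sin_pi_sub]
  rw [this]

lemma f1_int_firsthalf : IntervalIntegrable f1 volume 0 (1/2) := by
  apply abslog_int_half.mono_fun f1_meas.aestronglyMeasurable
  rw [Filter.EventuallyLE, ae_restrict_iff' measurableSet_uIoc]
  refine Filter.Eventually.of_forall fun x hx => ?_
  rw [Set.uIoc_of_le (by norm_num : (0:ℝ) ≤ 1/2)] at hx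
  have hb := f1_bound hx.1 hx.2
  simp only [Real.norm_eq_abs]
  rw [_root_.abs_of_nonneg (by positivity : (0:ℝ) ≤ Real.log 2 + |Real.log x|)]
  exact hb

lemma f1_int01 : IntervalIntegrable f1 volume 0 1 := by
  refine f1_int_firsthalf.trans ?_
  have h2 : IntervalIntegrable (fun x => f1 (1 - x)) volume (1 - 0) (1 - 1/2) :=
    f1_int_firsthalf.comp_sub_left 1
  have : (fun x => f1 (1 - x)) = f1 := funext fun x => f1_symm x
  rw [this] at h2
  norm_num at h2
  exact h2.symm

lemma f1_periodic : Function.Periodic f1 1 := fun x => by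
  rw [f1, f1, ee_periodic x]

lemma per_int_unit {f : ℝ → ℝ} (hp : Function.Periodic f 1)
    (h : IntervalIntegrable f volume 0 1) (a : ℝ) :
    IntervalIntegrable f volume a (a + 1) := by
  have key : ∀ m : ℤ, IntervalIntegrable f volume m (m + 1) := by
    intro m
    have h2 := h.comp_sub_right (m : ℝ)
    have he : (fun x => f (x - (m : ℝ))) = f := funext fun x => by
      have := (hp.zsmul m).sub_eq x
      simpa using this
    rw [he] at h2
    rw [zero_add] at h2
    rwa [add_comm] at h2
  have h1 := key ⌊a⌋
  have h2 : IntervalIntegrable f volume ((⌊a⌋:ℝ) + 1) ((⌊a⌋:ℝ) + 2) := by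
    have h2' := key (⌊a⌋ + 1)
    push_cast at h2'
    rwa [show ((⌊a⌋:ℝ) + 1 + 1) = (⌊a⌋:ℝ) + 2 by ring] at h2'
  have h12 : IntervalIntegrable f volume ⌊a⌋ ((⌊a⌋ : ℝ) + 2) := h1.trans h2
  refine h12.mono_set ?_
  have hfl := Int.floor_le a
  have hfl2 := Int.lt_floor_add_one a
  rw [Set.uIcc_of_le (by linarith : a ≤ a + 1),
    Set.uIcc_of_le (by linarith : (⌊a⌋ : ℝ) ≤ (⌊a⌋ : ℝ) + 2)]
  exact Set.Icc_subset_Icc (by linarith) (by linarith)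

lemma ee_eq_one {θ : ℝ} (h : ee θ = 1) : ∃ n : ℤ, θ = n := by
  rw [ee_apply, Complex.exp_eq_one_iff] at h
  obtain ⟨n, hn⟩ := h
  refine ⟨n, ?_⟩
  have hne : (2 * (Real.pi : ℂ) * Complex.I) ≠ 0 := by
    simp [Real.pi_ne_zero, Complex.I_ne_zero]
  have : (2 * (Real.pi : ℂ) * Complex.I) * θ = (2 * (Real.pi : ℂ) * Complex.I) * n := by
    rw [hn]; ring
  have := mul_left_cancel₀ hne this
  exact_mod_cast this

lemma ee_sq (θ : ℝ) : ee (2 * θ) = ee θ ^ 2 := by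
  rw [show 2 * θ = θ + θ by ring, ee_add, sq]

lemma integral_f1 : ∫ θ in (0:ℝ)..1, f1 θ = 0 := by
  have h01 := f1_int01
  have h12 : IntervalIntegrable f1 volume 1 2 := by
    have := per_int_unit f1_periodic f1_int01 1
    norm_num at this
    exact this
  have h02 : IntervalIntegrable f1 volume 0 2 := h01.trans h12
  have hg_int : IntervalIntegrable (fun θ => f1 (θ + 1/2)) volume 0 1 := by
    have := (per_int_unit f1_periodic f1_int01 (1/2)).comp_add_right (1/2)
    norm_num at this
    exact this
  -- a.e. pointwise duplication identity
  have hae : ∀ᵐ θ : ℝ ∂volume, θ ∈ Set.uIoc (0:ℝ) 1 →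
      f1 (2 * θ) = f1 θ + f1 (θ + 1/2) := by
    have hz : volume ({1/2, 1} : Set ℝ) = 0 := by
      have : ({1/2, 1} : Set ℝ).Countable := Set.Countable.insert _ (Set.countable_singleton _)
      exact this.measure_zero _
    filter_upwards [measure_eq_zero_iff_ae_notMem.mp hz] with θ hθ hmem
    rw [Set.uIoc_of_le (by norm_num : (0:ℝ) ≤ 1)] at hmem
    simp only [Set.mem_insert_iff, Set.mem_singleton_iff, not_or] at hθ
    have hne1 : ee θ - 1 ≠ 0 := by
      intro hc
      have h1 : ee θ = 1 := by linear_combination hc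
      obtain ⟨n, hn⟩ := ee_eq_one h1
      have l1 : (0:ℤ) < n := by exact_mod_cast hn ▸ hmem.1
      have l2 : (n:ℝ) ≤ 1 := hn ▸ hmem.2
      have l2' : n ≤ 1 := by exact_mod_cast l2
      have : n = 1 := by omega
      exact hθ.2 (by rw [hn, this]; norm_num)
    have hne2 : ee θ + 1 ≠ 0 := by
      intro hc
      have hhalf : ee (θ - 1/2) = 1 := by
        have e1 : ee θ = ee (θ - 1/2) * ee (1/2) := by rw [← ee_add]; norm_num
        rw [ee_half] at e1
        have : ee (θ - 1/2) = -ee θ := by linear_combination e1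
        rw [this]
        linear_combination -hc
      obtain ⟨n, hn⟩ := ee_eq_one hhalf
      have l1 : (-1/2 : ℝ) < n := by rw [← hn]; linarith [hmem.1]
      have l2 : (n:ℝ) ≤ 1/2 := by rw [← hn]; linarith [hmem.2]
      have l1' : 0 ≤ n := by
        by_contra hcon
        push_neg at hcon
        have : (n:ℝ) ≤ -1 := by exact_mod_cast (by omega : n ≤ -1)
        linarith
      have l2' : n ≤ 0 := by
        by_contra hcon
        push_neg at hcon
        have : (1:ℝ) ≤ (n:ℝ) := by exact_mod_cast hcon
        linarith
      have hn0 : n = 0 := le_antisymm l2' l1'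
      apply hθ.1
      rw [hn0] at hn
      push_cast at hn
      linarith
    have hfact : ee (2*θ) - 1 = (ee θ - 1) * (ee θ + 1) := by
      rw [ee_sq]; ring
    have hshift : ee (θ + 1/2) - 1 = -(ee θ + 1) := by
      rw [ee_add, ee_half]; ring
    rw [f1, f1, f1, hfact, hshift, map_mul, map_neg_eq_map,
      Real.log_mul (Complex.abs.ne_zero hne1) (Complex.abs.ne_zero hne2)]
  have heq := intervalIntegral.integral_congr_ae hae
  have hlhs : (∫ θ in (0:ℝ)..1, f1 (2 * θ)) = ∫ θ in (0:ℝ)..1, f1 θ := by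
    rw [intervalIntegral.integral_comp_mul_left f1 (two_ne_zero)]
    norm_num
    rw [← intervalIntegral.integral_add_adjacent_intervals h01 h12]
    have hper : (∫ θ in (1:ℝ)..2, f1 θ) = ∫ θ in (0:ℝ)..1, f1 θ := by
      have := f1_periodic.intervalIntegral_add_eq 1 0
      norm_num at this
      exact this
    rw [hper]
    ring
  have hrhs : (∫ θ in (0:ℝ)..1, (f1 θ + f1 (θ + 1/2)))
      = (∫ θ in (0:ℝ)..1, f1 θ) + ∫ θ in (0:ℝ)..1, f1 θ := by
    rw [intervalIntegral.integral_add h01 hg_int]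
    congr 1
    rw [intervalIntegral.integral_comp_add_right f1 (1/2)]
    have := f1_periodic.intervalIntegral_add_eq (1/2) 0
    norm_num at this ⊢
    exact this
  rw [heq, hrhs] at hlhs
  linarith

lemma cauchy_log (d : ℂ) (hd : Complex.abs d < 1) :
    ∫ θ in (0:ℝ)..1, Real.log (Complex.abs (1 - d * ee θ)) = 0 := by
  set g : ℂ → ℂ := fun z => Complex.log (1 - d * z) with hg
  have hslit : ∀ z : ℂ, Complex.abs z ≤ 1 → (1 - d * z) ∈ Complex.slitPlane := by
    intro z hz
    rw [Complex.mem_slitPlane_iff]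
    left
    have h1 : (d * z).re ≤ Complex.abs (d * z) := Complex.re_le_abs _
    have h2 : Complex.abs (d * z) ≤ Complex.abs d := by
      rw [map_mul]
      calc Complex.abs d * Complex.abs z ≤ Complex.abs d * 1 :=
        mul_le_mul_of_nonneg_left hz (Complex.abs.nonneg d)
      _ = Complex.abs d := mul_one _
    have : (1 - d * z).re = 1 - (d * z).re := by simp
    rw [this]
    linarith
  have haff : ∀ z : ℂ, DifferentiableAt ℂ (fun w => 1 - d * w) z := fun z =>
    (differentiableAt_const _).sub ((differentiableAt_const d).mul differentiableAt_id)
  have hdiff : DiffContOnCl ℂ g (Metric.ball 0 1) := by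
    constructor
    · intro z hz
      have hz1 : Complex.abs z ≤ 1 := by
        have h' := mem_ball_zero_iff.mp hz
        rw [Complex.norm_eq_abs] at h'
        exact h'.le
      exact ((haff z).clog (hslit z hz1)).differentiableWithinAt
    · rw [closure_ball (0:ℂ) one_ne_zero]
      intro z hz
      have hz1 : Complex.abs z ≤ 1 := by
        have h' := mem_closedBall_zero_iff.mp hz
        rwa [Complex.norm_eq_abs] at h'
      exact ((ContinuousAt.clog ((continuousAt_const).sub
        ((continuousAt_const).mul continuousAt_id)) (hslit z hz1))).continuousWithinAt
  have hcauchy := hdiff.circleIntegral_sub_inv_smul (w := 0)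
    (by simp : (0:ℂ) ∈ Metric.ball 0 1)
  have hg0 : g 0 = 0 := by simp [hg]
  rw [hg0, smul_zero] at hcauchy
  rw [circleIntegral] at hcauchy
  have hint : ∀ θ : ℝ, deriv (circleMap 0 1) θ • ((circleMap 0 1 θ - 0)⁻¹ • g (circleMap 0 1 θ))
      = Complex.I * g (Complex.exp (θ * Complex.I)) := by
    intro θ
    rw [deriv_circleMap]
    have hne : circleMap 0 1 θ ≠ 0 := circleMap_ne_center one_ne_zero
    have hcm : circleMap 0 1 θ = Complex.exp (θ * Complex.I) := by
      simp [circleMap]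
    rw [smul_eq_mul, smul_eq_mul, sub_zero]
    field_simp [hcm]
    rw [hcm, mul_comm]
  rw [intervalIntegral.integral_congr (fun θ _ => hint θ)] at hcauchy
  rw [intervalIntegral.integral_const_mul] at hcauchy
  have hIne : (Complex.I : ℂ) ≠ 0 := Complex.I_ne_zero
  have hzero : (∫ θ in (0:ℝ)..(2*Real.pi), g (Complex.exp (θ * Complex.I))) = 0 :=
    (mul_eq_zero.mp hcauchy).resolve_left hIne
  -- change of variables
  have hcv : (∫ θ in (0:ℝ)..1, g (Complex.exp ((2 * Real.pi * θ : ℝ) * Complex.I)))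
      = (2*Real.pi)⁻¹ • ∫ θ in (0:ℝ)..(2*Real.pi), g (Complex.exp (θ * Complex.I)) := by
    have := intervalIntegral.integral_comp_mul_left
      (fun x : ℝ => g (Complex.exp ((x:ℝ) * Complex.I))) (c := 2*Real.pi)
      (a := 0) (b := 1) (by positivity)
    simp only [mul_zero, mul_one] at this
    exact this
  rw [hzero, smul_zero] at hcv
  have hee : ∀ θ : ℝ, ee θ = Complex.exp ((2 * Real.pi * θ : ℝ) * Complex.I) := by
    intro θ
    rw [ee_apply]
    congr 1
    push_cast
    ring
  -- continuity and integrability of the complex integrand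
  have hcont : Continuous (fun θ : ℝ => g (ee θ)) := by
    rw [continuous_iff_continuousAt]
    intro θ
    exact ContinuousAt.clog ((continuousAt_const).sub
      ((continuousAt_const).mul (continuous_ee.continuousAt)))
      (hslit (ee θ) (le_of_eq (abs_ee θ)))
  have hii : IntervalIntegrable (fun θ : ℝ => g (ee θ)) volume 0 1 :=
    hcont.intervalIntegrable _ _
  have hre := Complex.reCLM.intervalIntegral_comp_comm hii
  have hgee : (∫ θ in (0:ℝ)..1, g (ee θ)) = 0 := by
    rw [show (fun θ : ℝ => g (ee θ)) = fun θ : ℝ =>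
      g (Complex.exp ((2 * Real.pi * θ : ℝ) * Complex.I)) from funext fun θ => by rw [hee]]
    exact hcv
  rw [hgee] at hre
  simp only [Complex.reCLM_apply, Complex.zero_re] at hre
  have : (fun θ : ℝ => (g (ee θ)).re) = fun θ : ℝ => Real.log (Complex.abs (1 - d * ee θ)) :=
    funext fun θ => Complex.log_re _
  rwa [this] at hre

lemma abs_ee_sub (θ : ℝ) (c : ℂ) :
    Complex.abs (ee θ - c) = Complex.abs (1 - (starRingEnd ℂ) c * ee θ) := by
  have hmc : ee θ * (starRingEnd ℂ) (ee θ) = 1 := by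
    rw [Complex.mul_conj]
    rw [Complex.normSq_eq_abs, abs_ee]
    norm_num
  have h1 : 1 - (starRingEnd ℂ) c * ee θ = ee θ * (starRingEnd ℂ) (ee θ - c) := by
    rw [map_sub, mul_sub, hmc]
    ring
  rw [h1, map_mul, abs_ee, one_mul, Complex.abs_conj]

lemma contJ {c : ℂ} (hne : Complex.abs c ≠ 1) :
    Continuous (fun θ : ℝ => Real.log (Complex.abs (ee θ - c))) := by
  rw [continuous_iff_continuousAt]
  intro θ
  have habs : Complex.abs (ee θ - c) ≠ 0 := by
    intro h
    rw [map_eq_zero, sub_eq_zero] at h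
    exact hne (by rw [← h, abs_ee])
  exact ContinuousAt.log
    ((Complex.continuous_abs.comp (continuous_ee.sub continuous_const)).continuousAt) habs

lemma ee_arg_eq {c : ℂ} (hc : Complex.abs c = 1) : ee (Complex.arg c / (2 * Real.pi)) = c := by
  have h2 : ee (Complex.arg c / (2 * Real.pi)) = Complex.exp (Complex.arg c * Complex.I) := by
    rw [ee_apply]
    congr 1
    have hpi : (Real.pi : ℂ) ≠ 0 := by exact_mod_cast Real.pi_ne_zero
    push_cast
    field_simp
  rw [h2]
  have := Complex.abs_mul_exp_arg_mul_I c
  rw [hc] at this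
  simpa using this

lemma J_shift (c : ℂ) (hc : Complex.abs c = 1) :
    (fun θ : ℝ => Real.log (Complex.abs (ee θ - c)))
      = fun θ : ℝ => f1 (θ - Complex.arg c / (2 * Real.pi)) := by
  set α := Complex.arg c / (2 * Real.pi)
  funext θ
  rw [f1]
  congr 1
  have hfact : ee θ - c = ee α * (ee (θ - α) - 1) := by
    rw [← ee_arg_eq hc]
    have : ee α * ee (θ - α) = ee θ := by rw [← ee_add]; ring_nf
    rw [mul_sub, this, mul_one]
  rw [hfact, map_mul, abs_ee, one_mul]

lemma J_int (c : ℂ) :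
    IntervalIntegrable (fun θ : ℝ => Real.log (Complex.abs (ee θ - c))) volume 0 1 := by
  rcases eq_or_ne (Complex.abs c) 1 with hc | hc
  · rw [J_shift c hc]
    set α := Complex.arg c / (2 * Real.pi)
    have h1 : IntervalIntegrable f1 volume (-α) (-α + 1) :=
      per_int_unit f1_periodic f1_int01 (-α)
    have h2 := h1.comp_sub_right α
    have : (-α + α) = 0 := by ring
    rw [this] at h2
    have : (-α + 1 + α) = 1 := by ring
    rwa [this] at h2
  · exact (contJ hc).intervalIntegrable _ _

lemma J_val (c : ℂ) :
    (∫ θ in (0:ℝ)..1, Real.log (Complex.abs (ee θ - c)))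
      = Real.log (max 1 (Complex.abs c)) := by
  rcases lt_trichotomy (Complex.abs c) 1 with hc | hc | hc
  · -- |c| < 1 : Cauchy
    have hpt : (fun θ : ℝ => Real.log (Complex.abs (ee θ - c)))
        = fun θ : ℝ => Real.log (Complex.abs (1 - (starRingEnd ℂ) c * ee θ)) :=
      funext fun θ => by rw [abs_ee_sub]
    rw [hpt, cauchy_log _ (by rwa [Complex.abs_conj]), max_eq_left hc.le, Real.log_one]
  · -- |c| = 1 : rotation + duplication
    rw [J_shift c hc]
    set α := Complex.arg c / (2 * Real.pi)
    rw [intervalIntegral.integral_comp_sub_right f1 α]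
    have hper := f1_periodic.intervalIntegral_add_eq (0 - α) 0
    rw [show (0 - α + 1 : ℝ) = 1 - α by ring, zero_add] at hper
    rw [hper, integral_f1, hc, max_self, Real.log_one]
  · -- |c| > 1
    have hc0 : c ≠ 0 := by
      intro h; rw [h] at hc; simp at hc; linarith
    have habs : Complex.abs c ≠ 0 := by positivity
    have hpt : ∀ θ : ℝ, Real.log (Complex.abs (ee θ - c))
        = Real.log (Complex.abs c) + Real.log (Complex.abs (1 - c⁻¹ * ee θ)) := by
      intro θ
      have hfact : ee θ - c = -c * (1 - c⁻¹ * ee θ) := by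
        field_simp
        ring
      have hne2 : Complex.abs (1 - c⁻¹ * ee θ) ≠ 0 := by
        intro h
        rw [map_eq_zero, sub_eq_zero] at h
        have : Complex.abs (c⁻¹ * ee θ) = 1 := by rw [← h]; simp
        rw [map_mul, abs_ee, mul_one, map_inv₀] at this
        rw [inv_eq_one_div] at this
        have : Complex.abs c = 1 := by field_simp at this; linarith
        linarith
      rw [hfact, map_mul, map_neg_eq_map,
        Real.log_mul habs hne2]
    rw [intervalIntegral.integral_congr (fun θ _ => hpt θ)]
    rw [intervalIntegral.integral_add intervalIntegrable_const ?hint]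
    case hint =>
      have : Complex.abs c⁻¹ ≠ 1 := by
        rw [map_inv₀]
        intro h
        rw [inv_eq_one_div] at h
        field_simp at h
        linarith
      -- integrability of θ ↦ log |1 - c⁻¹ ee θ|  : continuous
      have hcont : Continuous (fun θ : ℝ => Real.log (Complex.abs (1 - c⁻¹ * ee θ))) := by
        rw [continuous_iff_continuousAt]
        intro θ
        have habs2 : Complex.abs (1 - c⁻¹ * ee θ) ≠ 0 := by
          intro h
          rw [map_eq_zero, sub_eq_zero] at h
          have : Complex.abs (c⁻¹ * ee θ) = 1 := by rw [← h]; simp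
          rw [map_mul, abs_ee, mul_one, map_inv₀, inv_eq_one_div] at this
          have : Complex.abs c = 1 := by field_simp at this; linarith
          linarith
        exact ContinuousAt.log ((Complex.continuous_abs.comp
          ((continuous_const).sub (continuous_const.mul continuous_ee))).continuousAt) habs2
      exact hcont.intervalIntegrable _ _
    rw [cauchy_log c⁻¹ (by rw [map_inv₀]; rw [inv_lt_one_iff₀]; right; exact hc)]
    simp [max_eq_right hc.le]

lemma ee_fiber_countable (v : ℂ) : Set.Countable {θ : ℝ | ee θ = v} := by
  rcases Set.eq_empty_or_nonempty {θ : ℝ | ee θ = v} with h | ⟨θ₀, hθ₀⟩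
  · rw [h]; exact Set.countable_empty
  · simp only [Set.mem_setOf_eq] at hθ₀
    apply Set.Countable.mono (s₂ := Set.range (fun n : ℤ => θ₀ + n)) ?_ (Set.countable_range _)
    intro θ hθ
    simp only [Set.mem_setOf_eq] at hθ
    have h1 : ee (θ - θ₀) = 1 := by
      have h2 : ee (θ - θ₀) * ee θ₀ = ee θ := by rw [← ee_add]; ring_nf
      rw [hθ, ← hθ₀] at h2
      exact mul_right_cancel₀ (ee_ne θ₀) (by rw [h2, one_mul])
    obtain ⟨n, hn⟩ := ee_eq_one h1
    exact ⟨n, show θ₀ + (n:ℝ) = θ by linarith⟩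

lemma K_pt (r : ℝ) (hr : 0 < r) (c : ℂ) {θ : ℝ} (hθ : ee θ ≠ c / r) :
    Real.log (Complex.abs ((r:ℂ) * ee θ - c))
      = Real.log r + Real.log (Complex.abs (ee θ - c / r)) := by
  have hrne : (r:ℂ) ≠ 0 := by exact_mod_cast hr.ne'
  have hfact : (r:ℂ) * ee θ - c = (r:ℂ) * (ee θ - c / r) := by
    field_simp
  rw [hfact, map_mul, Complex.abs_ofReal, _root_.abs_of_pos hr,
    Real.log_mul hr.ne' (by rwa [ne_eq, map_eq_zero, sub_eq_zero])]

lemma K_ae (r : ℝ) (hr : 0 < r) (c : ℂ) :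
    ∀ᵐ θ : ℝ ∂volume, Real.log (Complex.abs ((r:ℂ) * ee θ - c))
      = Real.log r + Real.log (Complex.abs (ee θ - c / r)) := by
  have hz : volume {θ : ℝ | ee θ = c / r} = 0 := (ee_fiber_countable _).measure_zero _
  filter_upwards [measure_eq_zero_iff_ae_notMem.mp hz] with θ hθ
  exact K_pt r hr c hθ

lemma K_int (r : ℝ) (hr : 0 < r) (c : ℂ) :
    IntervalIntegrable (fun θ : ℝ => Real.log (Complex.abs ((r:ℂ) * ee θ - c)))
      volume 0 1 := by
  have h2 : IntervalIntegrable
      (fun θ : ℝ => Real.log r + Real.log (Complex.abs (ee θ - c / r))) volume 0 1 :=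
    intervalIntegrable_const.add (J_int (c / r))
  exact h2.congr_ae (ae_restrict_of_ae ((K_ae r hr c).mono fun θ h => h.symm))

lemma K_val (r : ℝ) (hr : 0 < r) (c : ℂ) :
    (∫ θ in (0:ℝ)..1, Real.log (Complex.abs ((r:ℂ) * ee θ - c)))
      = Real.log (max r (Complex.abs c)) := by
  have h1 : (∫ θ in (0:ℝ)..1, Real.log (Complex.abs ((r:ℂ) * ee θ - c)))
      = ∫ θ in (0:ℝ)..1, (Real.log r + Real.log (Complex.abs (ee θ - c / r))) := by
    apply intervalIntegral.integral_congr_ae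
    exact (K_ae r hr c).mono fun θ h _ => h
  rw [h1, intervalIntegral.integral_add intervalIntegrable_const (J_int _),
    intervalIntegral.integral_const, J_val]
  simp only [smul_eq_mul, sub_zero, one_mul]
  rw [map_div₀, Complex.abs_ofReal, _root_.abs_of_pos hr]
  rcases le_total (Complex.abs c) r with h | h
  · rw [max_eq_left (by rw [div_le_one hr]; exact h), Real.log_one,
      max_eq_left h, add_zero]
  · rw [max_eq_right (by rw [le_div_iff₀ hr, one_mul]; exact h), max_eq_right h,
      ← Real.log_mul hr.ne' (by have := lt_of_lt_of_le hr h; positivity)]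
    congr 1
    field_simp

-- doubled-angle versions
lemma K_periodic (r : ℝ) (c : ℂ) :
    Function.Periodic (fun θ : ℝ => Real.log (Complex.abs ((r:ℂ) * ee θ - c))) 1 :=
  fun x => by simp only [ee_periodic x]

lemma K2_int (r : ℝ) (hr : 0 < r) (c : ℂ) :
    IntervalIntegrable (fun θ : ℝ => Real.log (Complex.abs ((r:ℂ) * ee (2 * θ) - c)))
      volume 0 1 := by
  have h12 : IntervalIntegrable
      (fun θ : ℝ => Real.log (Complex.abs ((r:ℂ) * ee θ - c))) volume 1 2 := by
    have := per_int_unit (K_periodic r c) (K_int r hr c) 1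
    norm_num at this
    exact this
  have h02 := (K_int r hr c).trans h12
  have := h02.comp_mul_left (c := 2)
  norm_num at this
  exact this

lemma K2_val (r : ℝ) (hr : 0 < r) (c : ℂ) :
    (∫ θ in (0:ℝ)..1, Real.log (Complex.abs ((r:ℂ) * ee (2 * θ) - c)))
      = Real.log (max r (Complex.abs c)) := by
  have h12 : IntervalIntegrable
      (fun θ : ℝ => Real.log (Complex.abs ((r:ℂ) * ee θ - c))) volume 1 2 := by
    have := per_int_unit (K_periodic r c) (K_int r hr c) 1
    norm_num at this
    exact this
  rw [intervalIntegral.integral_comp_mul_left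
    (fun θ : ℝ => Real.log (Complex.abs ((r:ℂ) * ee θ - c))) two_ne_zero]
  norm_num
  rw [← intervalIntegral.integral_add_adjacent_intervals (K_int r hr c) h12]
  have hper : (∫ θ in (1:ℝ)..2, Real.log (Complex.abs ((r:ℂ) * ee θ - c)))
      = ∫ θ in (0:ℝ)..1, Real.log (Complex.abs ((r:ℂ) * ee θ - c)) := by
    have := (K_periodic r c).intervalIntegral_add_eq 1 0
    norm_num at this
    exact this
  rw [hper, K_val r hr c]
  ring

lemma ee2_fiber_countable (v : ℂ) : Set.Countable {θ : ℝ | ee (2 * θ) = v} := by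
  apply Set.Countable.mono ?_ ((ee_fiber_countable v).image (fun x => x / 2))
  intro θ hθ
  exact ⟨2 * θ, hθ, by ring⟩

lemma harith (x e : ℝ) (he : 0 ≤ e) :
    x + (1/2) * (max (-(2*x)) (-(2*e)) + max (-(2*x)) (2*e)) = e + max 0 (|x| - e) := by
  rcases le_total x e with h3 | h3 <;> rcases le_total (-x) e with h4 | h4 <;>
    simp only [max_def] <;> split_ifs <;> rcases abs_cases x with ⟨h5, h6⟩ | ⟨h5, h6⟩ <;>
    linarith

lemma alg (T v ca cb : ℂ) (hv : v ≠ 0)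
    (hsum : T^2 * (ca + cb) = 2*T^2 - 4) (hprod : T^2 * (ca * cb) = T^2) :
    (1 - T^2 * ((1 - v^2) * Complex.I / (2*v))^2)
      = T^2 * (v^2 - ca) * (v^2 - cb) / (4 * v^2) := by
  have hI := Complex.I_sq
  field_simp
  linear_combination (4*v^2) * hsum + (-4) * hprod +
    (8*v^2*T^2 - 4*v^4*T^2 - 4*T^2) * hI

set_option maxHeartbeats 1000000 in
/-- Jensen-formula computation of the integral of `log |√(1 - t² sin²(2π(θ+iε)))|`
over one period.  Here `|√w| = √|w|`, so the integrand is written as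
`Real.log (Real.sqrt (Complex.abs (...)))`.  The threshold `ε₀ = (1/2π) arcsinh(t'/t)`
is `+∞` when `t = 0`, in which case the correction term `2π max{0,|ε|-ε₀}` vanishes. -/
theorem stmt0 (t ε : ℝ) (ht0 : 0 ≤ t) (ht1 : t ≤ 1) :
    (∫ θ in (0:ℝ)..1,
        Real.log (Real.sqrt (norm
          (1 - (t : ℂ)^2 * (Complex.sin (2 * Real.pi * ((θ : ℂ) + (ε : ℂ) * Complex.I)))^2))))
      = Real.log ((1 + Real.sqrt (1 - t^2)) / 2) +
        (if t = 0 then 0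
         else 2 * Real.pi *
           max 0 (|ε| - (1 / (2 * Real.pi)) * Real.arsinh (Real.sqrt (1 - t^2) / t))) := by
  rcases eq_or_lt_of_le ht0 with ht | ht
  · -- t = 0
    rw [if_pos ht.symm, ← ht]
    norm_num
  rw [if_neg ht.ne']
  have hπ := Real.pi_pos
  set t' : ℝ := Real.sqrt (1 - t^2) with ht'def
  have ht'sq : t'^2 = 1 - t^2 := Real.sq_sqrt (by nlinarith)
  have ht'0 : 0 ≤ t' := Real.sqrt_nonneg _
  have ht'lt : t' < 1 := by nlinarith [ht'sq, ht'0, mul_pos ht ht]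
  set E₀ : ℝ := Real.arsinh (t' / t) with hE₀def
  have hexpE₀ : Real.exp E₀ = (1 + t') / t := by
    rw [hE₀def, Real.exp_arsinh]
    have h1 : 1 + (t'/t)^2 = (1/t)^2 := by
      field_simp
      nlinarith
    rw [h1, Real.sqrt_sq (by positivity)]
    field_simp
    ring
  have hE₀pos : 0 ≤ E₀ := Real.arsinh_nonneg_iff.mpr (by positivity)
  set r : ℝ := Real.exp (-(4*Real.pi*ε)) with hrdef
  have hr : 0 < r := Real.exp_pos _
  set A : ℝ := ((1 - t')/t)^2 with hAdef
  set B : ℝ := ((1 + t')/t)^2 with hBdef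
  have hApos : 0 < A := by
    have h1 : 0 < (1 - t')/t := div_pos (by linarith) ht
    exact pow_pos h1 2
  have hBpos : 0 < B := by
    have h1 : 0 < (1 + t')/t := div_pos (by linarith) ht
    exact pow_pos h1 2
  have h1t' : (1 - t') * (1 + t') = t^2 := by linear_combination -ht'sq
  have hAB : A * B = 1 := by
    rw [hAdef, hBdef, ← mul_pow, div_mul_div_comm, h1t', show t*t = t^2 by ring,
      div_self (by positivity : (t:ℝ)^2 ≠ 0), one_pow]
  have hApB : t^2 * (A + B) = 4 - 2*t^2 := by
    have h2 : A + B = ((1-t')^2 + (1+t')^2)/(t^2) := by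
      rw [hAdef, hBdef, div_pow, div_pow, ← add_div]
    rw [h2, mul_div_cancel₀ _ (by positivity : (t:ℝ)^2 ≠ 0)]
    linear_combination 2*ht'sq
  have hAexp : A = Real.exp (-(2*E₀)) := by
    have hBe : Real.exp (2*E₀) = B := by
      rw [show (2:ℝ)*E₀ = E₀ + E₀ by ring, Real.exp_add, hexpE₀, hBdef]
      ring
    rw [Real.exp_neg, hBe]
    exact eq_inv_of_mul_eq_one_left hAB
  have hBexp : B = Real.exp (2*E₀) := by
    rw [show (2:ℝ)*E₀ = E₀ + E₀ by ring, Real.exp_add, hexpE₀, hBdef]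
    ring
  -- complex constants
  set ca : ℂ := ((-A : ℝ) : ℂ) with hcadef
  set cb : ℂ := ((-B : ℝ) : ℂ) with hcbdef
  have habsca : Complex.abs ca = A := by
    rw [hcadef, Complex.abs_ofReal, abs_neg, _root_.abs_of_pos hApos]
  have habscb : Complex.abs cb = B := by
    rw [hcbdef, Complex.abs_ofReal, abs_neg, _root_.abs_of_pos hBpos]
  have hsumC : ((t:ℂ))^2 * (ca + cb) = 2*(t:ℂ)^2 - 4 := by
    rw [hcadef, hcbdef]
    have hre : ((t:ℝ))^2 * ((-A) + (-B)) = 2*t^2 - 4 := by linear_combination -hApB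
    exact_mod_cast congrArg (Complex.ofReal) hre
  have hprodC : ((t:ℂ))^2 * (ca * cb) = (t:ℂ)^2 := by
    rw [hcadef, hcbdef]
    have hre : ((t:ℝ))^2 * ((-A) * (-B)) = t^2 := by linear_combination t^2 * hAB
    exact_mod_cast congrArg (Complex.ofReal) hre
  -- the substitution w
  set z : ℝ → ℂ := fun θ => 2 * (Real.pi:ℂ) * ((θ:ℂ) + (ε:ℂ) * Complex.I) with hzdef
  set w : ℝ → ℂ := fun θ => Complex.exp (z θ * Complex.I) with hwdef
  set u : ℝ → ℂ := fun θ => (r:ℂ) * ee (2*θ) with hudef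
  have hwne : ∀ θ, w θ ≠ 0 := fun θ => Complex.exp_ne_zero _
  have hupt : ∀ θ : ℝ, u θ = (r:ℂ) * ee (2*θ) := fun _ => rfl
  have hwpt : ∀ θ : ℝ, w θ = Complex.exp (z θ * Complex.I) := fun _ => rfl
  have hw2 : ∀ θ, w θ ^ 2 = u θ := by
    intro θ
    rw [hwpt θ, hupt θ]
    rw [sq, ← Complex.exp_add, ee_apply, hrdef, Complex.ofReal_exp, ← Complex.exp_add]
    congr 1
    rw [hzdef]
    push_cast
    linear_combination (4*(Real.pi:ℂ)*(ε:ℂ)) * Complex.I_sq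
  have hune : ∀ θ, u θ ≠ 0 := by
    intro θ
    rw [← hw2 θ]
    exact pow_ne_zero 2 (hwne θ)
  have habsu : ∀ θ, Complex.abs (u θ) = r := by
    intro θ
    rw [hupt θ]
    rw [map_mul, abs_ee, mul_one, Complex.abs_ofReal, _root_.abs_of_pos hr]
  have hsin' : ∀ θ : ℝ, Complex.sin (z θ) = (1 - w θ^2) * Complex.I / (2 * w θ) := by
    intro θ
    rw [Complex.sin, hwpt θ, neg_mul, Complex.exp_neg]
    have hv := hwne θ
    field_simp
  have hQu : ∀ θ : ℝ, (1 - (t:ℂ)^2 * (Complex.sin (z θ))^2)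
      = (t:ℂ)^2 * (u θ - ca) * (u θ - cb) / (4 * u θ) := by
    intro θ
    rw [hsin' θ, ← hw2 θ]
    exact alg (t:ℂ) (w θ) ca cb (hwne θ) hsumC hprodC
  -- pointwise identity for the integrand
  set C : ℝ := Real.log t - Real.log 2 + 2*Real.pi*ε with hCdef
  have key : ∀ θ : ℝ, u θ ≠ ca → u θ ≠ cb →
      Real.log (Real.sqrt (Complex.abs
          (1 - (t : ℂ)^2 * (Complex.sin (2 * Real.pi * ((θ : ℂ) + (ε : ℂ) * Complex.I)))^2)))
        = C + ((1/2) * Real.log (Complex.abs (u θ - ca))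
            + (1/2) * Real.log (Complex.abs (u θ - cb))) := by
    intro θ hca' hcb'
    have hzz : (2 * (Real.pi:ℂ) * ((θ:ℂ) + (ε:ℂ) * Complex.I)) = z θ := by rw [hzdef]
    rw [show (2 * ↑Real.pi * ((θ:ℂ) + (ε:ℂ) * Complex.I)) = z θ from hzz, hQu θ]
    have habsQ : Complex.abs ((t:ℂ)^2 * (u θ - ca) * (u θ - cb) / (4 * u θ))
        = t^2 * Complex.abs (u θ - ca) * Complex.abs (u θ - cb) / (4 * r) := by
      rw [map_div₀, map_mul, map_mul, map_mul, map_pow, Complex.abs_ofReal,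
        _root_.abs_of_pos ht, habsu]
      norm_num [Complex.abs_eq_norm']
    rw [habsQ]
    have hne1 : Complex.abs (u θ - ca) ≠ 0 := by
      rw [ne_eq, map_eq_zero, sub_eq_zero]; exact hca'
    have hne2 : Complex.abs (u θ - cb) ≠ 0 := by
      rw [ne_eq, map_eq_zero, sub_eq_zero]; exact hcb'
    have hne1' : 0 < Complex.abs (u θ - ca) :=
      lt_of_le_of_ne (Complex.abs.nonneg _) (Ne.symm hne1)
    have hne2' : 0 < Complex.abs (u θ - cb) :=
      lt_of_le_of_ne (Complex.abs.nonneg _) (Ne.symm hne2)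
    rw [Real.log_sqrt (by positivity)]
    rw [Real.log_div (by positivity) (by positivity),
      Real.log_mul (by positivity) hne2, Real.log_mul (by positivity) hne1,
      Real.log_mul (by norm_num) hr.ne', Real.log_pow, hrdef, Real.log_exp]
    have hlog4 : Real.log 4 = 2 * Real.log 2 := by
      rw [show (4:ℝ) = 2^2 by norm_num, Real.log_pow]
      push_cast
      ring
    rw [hlog4, hCdef]
    push_cast
    ring
  -- a.e. equality and integration
  have hzmeas : volume ({θ : ℝ | ee (2*θ) = ca / r} ∪ {θ : ℝ | ee (2*θ) = cb / r}) = 0 := by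
    apply measure_union_null
    · exact (ee2_fiber_countable _).measure_zero _
    · exact (ee2_fiber_countable _).measure_zero _
  have hae : ∀ᵐ θ : ℝ ∂volume,
      Real.log (Real.sqrt (Complex.abs
          (1 - (t : ℂ)^2 * (Complex.sin (2 * Real.pi * ((θ : ℂ) + (ε : ℂ) * Complex.I)))^2)))
        = C + ((1/2) * Real.log (Complex.abs (u θ - ca))
            + (1/2) * Real.log (Complex.abs (u θ - cb))) := by
    filter_upwards [measure_eq_zero_iff_ae_notMem.mp hzmeas] with θ hθ
    simp only [Set.mem_union, Set.mem_setOf_eq, not_or] at hθ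
    apply key θ
    · intro hcon
      apply hθ.1
      rw [hupt θ] at hcon
      show ee (2*θ) = ca / (r:ℂ)
      rw [eq_div_iff (by exact_mod_cast hr.ne' : ((r:ℝ):ℂ) ≠ 0)]
      linear_combination hcon
    · intro hcon
      apply hθ.2
      rw [hupt θ] at hcon
      show ee (2*θ) = cb / (r:ℂ)
      rw [eq_div_iff (by exact_mod_cast hr.ne' : ((r:ℝ):ℂ) ≠ 0)]
      linear_combination hcon
  change (∫ θ in (0:ℝ)..1, Real.log (Real.sqrt (Complex.abs
      (1 - (t : ℂ)^2 * (Complex.sin (2 * Real.pi * ((θ : ℂ) + (ε : ℂ) * Complex.I)))^2)))) = _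
  rw [intervalIntegral.integral_congr_ae (hae.mono fun θ h _ => h)]
  -- split the integral
  have hint1 : IntervalIntegrable
      (fun θ : ℝ => (1/2) * Real.log (Complex.abs (u θ - ca))) volume 0 1 := by
    exact (K2_int r hr ca).const_mul (1/2)
  have hint2 : IntervalIntegrable
      (fun θ : ℝ => (1/2) * Real.log (Complex.abs (u θ - cb))) volume 0 1 := by
    exact (K2_int r hr cb).const_mul (1/2)
  rw [intervalIntegral.integral_add intervalIntegrable_const (hint1.add hint2),
    intervalIntegral.integral_add hint1 hint2,
    intervalIntegral.integral_const_mul, intervalIntegral.integral_const_mul]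
  have hval1 : (∫ θ in (0:ℝ)..1, Real.log (Complex.abs (u θ - ca)))
      = Real.log (max r A) := by
    have h := K2_val r hr ca
    rw [habsca] at h
    exact h
  have hval2 : (∫ θ in (0:ℝ)..1, Real.log (Complex.abs (u θ - cb)))
      = Real.log (max r B) := by
    have h := K2_val r hr cb
    rw [habscb] at h
    exact h
  rw [hval1, hval2]
  simp only [intervalIntegral.integral_const, smul_eq_mul, sub_zero, one_mul]
  -- final arithmetic
  have hmax1 : Real.log (max r A) = max (-(2*(2*Real.pi*ε))) (-(2*E₀)) := by
    rw [hrdef, hAexp, ← Monotone.map_max Real.exp_monotone, Real.log_exp]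
    congr 1
    ring
  have hmax2 : Real.log (max r B) = max (-(2*(2*Real.pi*ε))) (2*E₀) := by
    rw [hrdef, hBexp, ← Monotone.map_max Real.exp_monotone, Real.log_exp]
    congr 1
    ring
  rw [hmax1, hmax2, hCdef]
  have hE₀eq : E₀ = Real.log (1+t') - Real.log t := by
    rw [← Real.log_exp E₀, hexpE₀, Real.log_div (by positivity) ht.ne']
  have hlog12 : Real.log ((1 + t')/2) = Real.log (1+t') - Real.log 2 :=
    Real.log_div (by positivity) two_ne_zero
  have hmaxpull : 2*Real.pi * max 0 (|ε| - (1/(2*Real.pi))*E₀)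
      = max 0 (|2*Real.pi*ε| - E₀) := by
    rw [mul_max_of_nonneg _ _ (by positivity : (0:ℝ) ≤ 2*Real.pi), mul_zero]
    congr 1
    rw [abs_mul, _root_.abs_of_pos (by positivity : (0:ℝ) < 2*Real.pi)]
    field_simp
  rw [hlog12, hmaxpull]
  have := harith (2*Real.pi*ε) E₀ hE₀pos
  linarith
end

section
/- Let {α_n}_{n∈ℤ} ⊂ 𝔻 (the open unit disk) and ρ_n = √(1−|α_n|²). For any two sequences {ξ_n}, {ζ_n} of unimodular complex numbers, the generalized extended CMV matrices ℰ^ξ and ℰ^ζ built from Verblunsky pairs (α_n, ξ_n ρ_n) and (α_n, ζ_n ρ_n) respectively are unitarily equivalent via a diagonal unitary: there exists a diagonal unitary D on ℓ²(ℤ) with ℰ^ξ = D* ℰ^ζ D. -/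
open Complex ComplexConjugate


noncomputable def dph (u : ℤ → ℂ) (n : ℤ) : ℂ :=
  if 0 ≤ n then ∏ k ∈ Finset.range n.toNat, u k
  else (∏ k ∈ Finset.range (-n).toNat, u (-(k:ℤ) - 1))⁻¹

lemma dph_step (u : ℤ → ℂ) (hu : ∀ k, u k ≠ 0) (n : ℤ) :
    dph u (n + 1) = dph u n * u n := by
  rcases le_or_gt 0 n with h | h
  · rw [dph, dph, if_pos h, if_pos (show (0:ℤ) ≤ n + 1 by omega)]
    rw [show (n+1).toNat = n.toNat + 1 by omega, Finset.prod_range_succ,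
      show ((n.toNat : ℤ)) = n from Int.toNat_of_nonneg h]
  · rcases eq_or_lt_of_le (by omega : n ≤ -1) with h1 | h1
    · subst h1
      simp [dph, hu]
    · rw [dph, dph, if_neg (show ¬ (0:ℤ) ≤ n by omega),
        if_neg (show ¬ (0:ℤ) ≤ n + 1 by omega)]
      rw [show (-n).toNat = (-(n+1)).toNat + 1 by omega, Finset.prod_range_succ]
      rw [show (-((-(n+1)).toNat : ℤ) - 1) = n by omega]
      rw [mul_inv, inv_mul_cancel_right₀ (hu n)]

lemma dph_abs (u : ℤ → ℂ) (hu : ∀ k, ‖u k‖ = 1) (n : ℤ) :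
    ‖dph u n‖ = 1 := by
  rw [dph]; split_ifs <;> simp [norm_prod, hu, Finset.prod_congr rfl fun x _ => hu _]

lemma conj_eq_inv {z : ℂ} (h : ‖z‖ = 1) : conj z = z⁻¹ := by
  rw [Complex.inv_def, Complex.normSq_eq_norm_sq, h]; simp

/-- The `(m,n)` matrix entry of the generalized extended CMV matrix `ℰ = ℒℳ` built from
Verblunsky pairs `(α_k, ρ_k)`, where `ℒ = ⊕ Θ(α_{2n},ρ_{2n})` acts on `span{δ_{2n},δ_{2n+1}}`,
`ℳ = ⊕ Θ(α_{2n+1},ρ_{2n+1})` acts on `span{δ_{2n+1},δ_{2n+2}}`, and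
`Θ(α,ρ) = [[conj α, ρ],[conj ρ, -α]]`. -/
def GECMVentry (α ρ : ℤ → ℂ) (m n : ℤ) : ℂ :=
  if Even m then
    if n = m - 1 then conj (α m) * conj (ρ (m - 1))
    else if n = m then -(conj (α m) * α (m - 1))
    else if n = m + 1 then ρ m * conj (α (m + 1))
    else if n = m + 2 then ρ m * ρ (m + 1)
    else 0
  else
    if n = m - 2 then conj (ρ (m - 1)) * conj (ρ (m - 2))
    else if n = m - 1 then -(conj (ρ (m - 1)) * α (m - 2))
    else if n = m then -(α (m - 1) * conj (α m))
    else if n = m + 1 then -(α (m - 1) * ρ m)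
    else 0

/-- Any two GECMV matrices with the same Verblunsky `α`'s (and `ρ`'s differing only by
unimodular phases `ξ_n`, `ζ_n`) are unitarily equivalent via a diagonal unitary
`D = diag(d_n)`; entrywise, `ℰ^ξ(m,n) = conj(d_m) ℰ^ζ(m,n) d_n`. -/
theorem stmt3 (α ξ ζ : ℤ → ℂ) (hα : ∀ n, ‖α n‖ < 1)
    (hξ : ∀ n, ‖ξ n‖ = 1) (hζ : ∀ n, ‖ζ n‖ = 1) :
    ∃ d : ℤ → ℂ, (∀ n, ‖d n‖ = 1) ∧
      ∀ m n : ℤ,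
        GECMVentry α (fun k => ξ k * (Real.sqrt (1 - ‖α k‖^2) : ℝ)) m n
          = conj (d m) *
            GECMVentry α (fun k => ζ k * (Real.sqrt (1 - ‖α k‖^2) : ℝ)) m n
            * d n := by
  set u : ℤ → ℂ := fun k => ξ k * conj (ζ k) with hu_def
  have hu_abs : ∀ k, ‖u k‖ = 1 := by
    intro k; simp [hu_def, map_mul, hξ, hζ]
  have hu_ne : ∀ k, u k ≠ 0 := by
    intro k h; have := hu_abs k; rw [h, norm_zero] at this; norm_num at this
  set d : ℤ → ℂ := dph u with hd_def
  have habs : ∀ n, ‖d n‖ = 1 := dph_abs u hu_abs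
  have hd0 : ∀ n, d n ≠ 0 := by
    intro n h; have := habs n; rw [h, norm_zero] at this; norm_num at this
  have hd1 : ∀ n, conj (d n) * d n = 1 := fun n => by
    rw [conj_eq_inv (habs n), inv_mul_cancel₀ (hd0 n)]
  have hstep : ∀ n, d (n + 1) = d n * u n := dph_step u hu_ne
  have hζ1 : ∀ k, ζ k * conj (ζ k) = 1 := fun k => by
    rw [Complex.mul_conj, Complex.normSq_eq_norm_sq, hζ]; norm_num
  have hcu : ∀ k, conj (u k) = conj (ξ k) * ζ k := fun k => by
    rw [hu_def]; simp [map_mul]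
  have k1p : ∀ m, conj (d m) * d (m + 1) = ξ m * conj (ζ m) := fun m => by
    rw [hstep, ← mul_assoc, hd1, one_mul, hu_def]
  have k1m : ∀ m, conj (d m) * d (m - 1) = conj (ξ (m - 1)) * ζ (m - 1) := by
    intro m
    have h := hstep (m - 1)
    rw [show m - 1 + 1 = m by ring] at h
    calc conj (d m) * d (m - 1) = conj (conj (d (m - 1)) * d m) := by
          rw [map_mul, conj_conj, mul_comm]
      _ = conj (conj (d (m - 1)) * (d (m - 1) * u (m - 1))) := by rw [← h]
      _ = conj (u (m - 1)) := by rw [← mul_assoc, hd1, one_mul]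
      _ = conj (ξ (m - 1)) * ζ (m - 1) := hcu _
  have k2p : ∀ m, conj (d m) * d (m + 2)
      = ξ m * conj (ζ m) * (ξ (m + 1) * conj (ζ (m + 1))) := by
    intro m
    have h := hstep (m + 1)
    rw [show m + 1 + 1 = m + 2 by ring] at h
    rw [h, ← mul_assoc, k1p, hu_def]
  have k2m : ∀ m, conj (d m) * d (m - 2)
      = conj (ξ (m - 2)) * ζ (m - 2) * (conj (ξ (m - 1)) * ζ (m - 1)) := by
    intro m
    have h := k2p (m - 2)
    rw [show m - 2 + 2 = m by ring, show m - 2 + 1 = m - 1 by ring] at h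
    calc conj (d m) * d (m - 2) = conj (conj (d (m - 2)) * d m) := by
          rw [map_mul, conj_conj, mul_comm]
      _ = conj (ξ (m - 2) * conj (ζ (m - 2)) * (ξ (m - 1) * conj (ζ (m - 1)))) := by
          rw [h]
      _ = conj (ξ (m - 2)) * ζ (m - 2) * (conj (ξ (m - 1)) * ζ (m - 1)) := by
          simp [map_mul]
  refine ⟨d, habs, fun m n => ?_⟩
  simp only [GECMVentry]
  split_ifs with hm h1 h2 h3 h4 h1 h2 h3 h4
  · subst h1
    rw [mul_right_comm (conj (d m)) _ (d (m - 1)), k1m]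
    try simp only [map_mul, Complex.conj_ofReal]
    linear_combination (-(conj (α m) * conj (ξ (m - 1)) *
      ((Real.sqrt (1 - ‖α (m - 1)‖ ^ 2) : ℝ) : ℂ))) * hζ1 (m - 1)
  · subst h2
    rw [mul_right_comm, hd1, one_mul]
  · subst h3
    rw [mul_right_comm (conj (d m)) _ (d (m + 1)), k1p]
    try simp only [map_mul, Complex.conj_ofReal]
    linear_combination (-(ξ m * ((Real.sqrt (1 - ‖α m‖ ^ 2) : ℝ) : ℂ) *
      conj (α (m + 1)))) * hζ1 m
  · subst h4
    rw [mul_right_comm (conj (d m)) _ (d (m + 2)), k2p]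
    try simp only [map_mul, Complex.conj_ofReal]
    linear_combination
      (-(ξ m * ξ (m + 1) * ((Real.sqrt (1 - ‖α m‖ ^ 2) : ℝ) : ℂ) *
        ((Real.sqrt (1 - ‖α (m + 1)‖ ^ 2) : ℝ) : ℂ))) * hζ1 m +
      (-(ξ m * ξ (m + 1) * ((Real.sqrt (1 - ‖α m‖ ^ 2) : ℝ) : ℂ) *
        ((Real.sqrt (1 - ‖α (m + 1)‖ ^ 2) : ℝ) : ℂ) *
        (ζ m * conj (ζ m)))) * hζ1 (m + 1)
  · ring
  · subst h1
    rw [mul_right_comm (conj (d m)) _ (d (m - 2)), k2m]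
    try simp only [map_mul, Complex.conj_ofReal]
    linear_combination
      (-(conj (ξ (m - 1)) * conj (ξ (m - 2)) *
        ((Real.sqrt (1 - ‖α (m - 1)‖ ^ 2) : ℝ) : ℂ) *
        ((Real.sqrt (1 - ‖α (m - 2)‖ ^ 2) : ℝ) : ℂ))) * hζ1 (m - 2) +
      (-(conj (ξ (m - 1)) * conj (ξ (m - 2)) *
        ((Real.sqrt (1 - ‖α (m - 1)‖ ^ 2) : ℝ) : ℂ) *
        ((Real.sqrt (1 - ‖α (m - 2)‖ ^ 2) : ℝ) : ℂ) *
        (ζ (m - 2) * conj (ζ (m - 2))))) * hζ1 (m - 1)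
  · subst h2
    rw [mul_right_comm (conj (d m)) _ (d (m - 1)), k1m]
    try simp only [map_mul, Complex.conj_ofReal]
    linear_combination (conj (ξ (m - 1)) *
      ((Real.sqrt (1 - ‖α (m - 1)‖ ^ 2) : ℝ) : ℂ) * α (m - 2)) * hζ1 (m - 1)
  · subst h3
    rw [mul_right_comm, hd1, one_mul]
  · subst h4
    rw [mul_right_comm (conj (d m)) _ (d (m + 1)), k1p]
    try simp only [map_mul, Complex.conj_ofReal]
    linear_combination (α (m - 1) * ξ m *
      ((Real.sqrt (1 - ‖α m‖ ^ 2) : ℝ) : ℂ)) * hζ1 m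
  · ring
end

section
/- Every generalized extended CMV matrix is gauge-equivalent to a standard extended CMV matrix: for any GECMV matrix ℰ with Verblunsky pairs (α_k, ρ_k)_{k∈ℤ} (|α_k|²+|ρ_k|²=1), there is a diagonal unitary operator D on ℓ²(ℤ) such that D* ℰ D is the extended CMV matrix with Verblunsky pairs (α_k, |ρ_k|)_{k∈ℤ}. -/
open Complex ComplexConjugate

/-- The phase of `ρ k` (or `1` if `ρ k = 0`). -/
noncomputable def uu (ρ : ℤ → ℂ) (k : ℤ) : ℂ :=
  if ρ k = 0 then 1 else ρ k / (‖ρ k‖ : ℂ)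

/-- The gauge: `d 0 = 1`, `conj (d (k+1)) * d k = uu ρ k`. -/
noncomputable def dd (ρ : ℤ → ℂ) : ℤ → ℂ
  | Int.ofNat n => ∏ k ∈ Finset.range n, conj (uu ρ (k : ℤ))
  | Int.negSucc n => ∏ k ∈ Finset.range (n + 1), uu ρ (Int.negSucc k)

lemma abs_uu (ρ : ℤ → ℂ) (k : ℤ) : ‖uu ρ k‖ = 1 := by
  unfold uu
  split_ifs with h
  · simp
  · rw [norm_div]
    simp [div_self, norm_ne_zero_iff.mpr h]

lemma abs_dd (ρ : ℤ → ℂ) (n : ℤ) : ‖dd ρ n‖ = 1 := by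
  cases n with
  | ofNat n => simp only [dd, norm_prod]; simp [abs_uu]
  | negSucc n => simp only [dd, norm_prod]; simp [abs_uu]

lemma conj_dd_mul (ρ : ℤ → ℂ) (n : ℤ) : conj (dd ρ n) * dd ρ n = 1 := by
  rw [mul_comm, Complex.mul_conj']
  norm_cast
  rw [abs_dd]
  norm_num

lemma hA (ρ : ℤ → ℂ) (k : ℤ) : conj (dd ρ (k + 1)) * dd ρ k = uu ρ k := by
  cases k with
  | ofNat n =>
      have h1 : (Int.ofNat n : ℤ) + 1 = Int.ofNat (n + 1) := rfl
      rw [h1]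
      show conj (∏ k ∈ Finset.range (n + 1), conj (uu ρ (k : ℤ))) *
        (∏ k ∈ Finset.range n, conj (uu ρ (k : ℤ))) = uu ρ (Int.ofNat n)
      rw [Finset.prod_range_succ, map_mul, Complex.conj_conj]
      have hc := conj_dd_mul ρ (Int.ofNat n)
      have hd : (∏ k ∈ Finset.range n, conj (uu ρ (k : ℤ))) = dd ρ (Int.ofNat n) := rfl
      rw [hd]
      have hn : ((n : ℕ) : ℤ) = Int.ofNat n := rfl
      rw [hn]
      linear_combination uu ρ (Int.ofNat n) * hc
  | negSucc n =>
      cases n with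
      | zero =>
          have h1 : (Int.negSucc 0 : ℤ) + 1 = Int.ofNat 0 := rfl
          rw [h1]
          show conj (∏ k ∈ Finset.range 0, conj (uu ρ (k : ℤ))) *
            (∏ k ∈ Finset.range 1, uu ρ (Int.negSucc k)) = uu ρ (Int.negSucc 0)
          simp
      | succ n =>
          have h1 : (Int.negSucc (n + 1) : ℤ) + 1 = Int.negSucc n := rfl
          rw [h1]
          show conj (dd ρ (Int.negSucc n)) *
            (∏ k ∈ Finset.range (n + 2), uu ρ (Int.negSucc k)) = uu ρ (Int.negSucc (n + 1))
          rw [Finset.prod_range_succ]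
          have h2 : (∏ k ∈ Finset.range (n + 1), uu ρ (Int.negSucc k)) = dd ρ (Int.negSucc n) := rfl
          rw [h2]
          have hc := conj_dd_mul ρ (Int.negSucc n)
          linear_combination uu ρ (Int.negSucc (n + 1)) * hc

lemma hB (ρ : ℤ → ℂ) (k : ℤ) : uu ρ k * conj (ρ k) = (‖ρ k‖ : ℂ) := by
  unfold uu
  split_ifs with hk
  · simp [hk]
  · rw [div_mul_eq_mul_div, Complex.mul_conj']
    have hne : (‖ρ k‖ : ℂ) ≠ 0 := by
      exact_mod_cast norm_ne_zero_iff.mpr hk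
    rw [div_eq_iff hne]
    norm_cast
    ring

lemma hB' (ρ : ℤ → ℂ) (k : ℤ) : conj (uu ρ k) * ρ k = (‖ρ k‖ : ℂ) := by
  have := congrArg conj (hB ρ k)
  rw [map_mul, Complex.conj_conj, Complex.conj_ofReal] at this
  exact this

/-- Every GECMV matrix with Verblunsky pairs `(α_k, ρ_k)` (with `|α_k|² + |ρ_k|² = 1`) is
gauge-equivalent, via a diagonal unitary `D = diag(d_n)`, to the standard extended CMV matrix
with pairs `(α_k, |ρ_k|)`: entrywise `(D*ℰD)(m,n) = conj(d_m) ℰ(m,n) d_n`. -/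
theorem stmt4 (α ρ : ℤ → ℂ)
    (h : ∀ k, ‖α k‖^2 + ‖ρ k‖^2 = 1) :
    ∃ d : ℤ → ℂ, (∀ n, ‖d n‖ = 1) ∧
      ∀ m n : ℤ, conj (d m) * GECMVentry α ρ m n * d n
        = GECMVentry α (fun k => (‖ρ k‖ : ℂ)) m n := by
  refine ⟨dd ρ, abs_dd ρ, fun m n => ?_⟩
  have e1 := hA ρ (m - 1)
  rw [sub_add_cancel] at e1
  have e4 := hA ρ (m - 2)
  rw [show m - 2 + 1 = m - 1 by ring] at e4
  have e2' := congrArg conj (hA ρ m)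
  simp only [map_mul, Complex.conj_conj] at e2'
  have e3' := congrArg conj (hA ρ (m + 1))
  simp only [map_mul, Complex.conj_conj] at e3'
  rw [show m + 1 + 1 = m + 2 by ring] at e3'
  have c0 := conj_dd_mul ρ m
  have c1 := conj_dd_mul ρ (m - 1)
  have c2 := conj_dd_mul ρ (m + 1)
  have b0 := hB ρ m
  have b1 := hB ρ (m - 1)
  have b2 := hB ρ (m - 2)
  have b0' := hB' ρ m
  have b1' := hB' ρ (m + 1)
  have key1 : conj (dd ρ m) * dd ρ (m + 2) * (conj (dd ρ (m + 1)) * dd ρ (m + 1))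
      = conj (uu ρ m) * conj (uu ρ (m + 1)) := by
    linear_combination dd ρ (m + 2) * conj (dd ρ (m + 1)) * e2' + conj (uu ρ m) * e3'
  rw [c2, mul_one] at key1
  have key2 : conj (dd ρ m) * dd ρ (m - 2) * (conj (dd ρ (m - 1)) * dd ρ (m - 1))
      = uu ρ (m - 1) * uu ρ (m - 2) := by
    linear_combination dd ρ (m - 2) * conj (dd ρ (m - 1)) * e1 + uu ρ (m - 1) * e4
  rw [c1, mul_one] at key2
  by_cases hm : Even m
  · simp only [GECMVentry, if_pos hm]
    split_ifs with h1 h2 h3 h4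
    · rw [h1]
      try simp only [Complex.conj_ofReal]
      linear_combination conj (α m) * conj (ρ (m - 1)) * e1 + conj (α m) * b1
    · rw [h2]
      linear_combination (-(conj (α m) * α (m - 1))) * c0
    · rw [h3]
      linear_combination ρ m * conj (α (m + 1)) * e2' + conj (α (m + 1)) * b0'
    · rw [h4]
      try simp only [Complex.conj_ofReal]
      linear_combination ρ m * ρ (m + 1) * key1 + ρ (m + 1) * conj (uu ρ (m + 1)) * b0'
        + (‖ρ m‖ : ℂ) * b1'
    · ring
  · simp only [GECMVentry, if_neg hm]
    split_ifs with h1 h2 h3 h4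
    · rw [h1]
      try simp only [Complex.conj_ofReal]
      linear_combination conj (ρ (m - 1)) * conj (ρ (m - 2)) * key2
        + conj (ρ (m - 2)) * uu ρ (m - 2) * b1 + (‖ρ (m - 1)‖ : ℂ) * b2
    · rw [h2]
      try simp only [Complex.conj_ofReal]
      linear_combination (-(conj (ρ (m - 1)) * α (m - 2))) * e1 - α (m - 2) * b1
    · rw [h3]
      linear_combination (-(α (m - 1) * conj (α m))) * c0
    · rw [h4]
      try simp only [Complex.conj_ofReal]
      linear_combination (-(α (m - 1) * ρ m)) * e2' - α (m - 1) * b0'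
    · ring
end

section
/- Let w(θ+iε) = √(1 − λ₂² sin²(2π(θ+iε))) for λ₂ ∈ (0,1]. Then w extends analytically (and is nonvanishing) on the strip |ε| < (1/(2π))·arcsinh(√(λ₂^{−2} − 1)); equivalently, 1 − λ₂² sin²(2πz) ≠ 0 for all complex z with |Im z| < (1/(2π))·arcsinh(λ₂'/λ₂), where λ₂' = √(1−λ₂²). -/
open Real Complex

/-- For `λ₂ ∈ (0,1]`, the function `1 - λ₂² sin²(2πz)` does not vanish on the strip
`|Im z| < (1/2π) arcsinh(λ₂'/λ₂)` with `λ₂' = √(1-λ₂²)`; equivalently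
`w = √(1 - λ₂² sin²(2π·))` extends analytically and nonvanishingly to this strip. -/
theorem stmt13 (lam2 : ℝ) (h : lam2 ∈ Set.Ioc (0:ℝ) 1) (z : ℂ)
    (hz : |z.im| < (1 / (2 * Real.pi)) * Real.arsinh (Real.sqrt (1 - lam2^2) / lam2)) :
    1 - (lam2 : ℂ)^2 * (Complex.sin (2 * Real.pi * z))^2 ≠ 0 := by
  obtain ⟨hl0, hl1⟩ := h
  have hpi : (0:ℝ) < Real.pi := Real.pi_pos
  intro heq
  set c : ℝ := Real.sqrt (1 - lam2^2) / lam2 with hc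
  have hc0 : 0 ≤ c := div_nonneg (Real.sqrt_nonneg _) hl0.le
  have hc2 : c ^ 2 = 1 / lam2 ^ 2 - 1 := by
    rw [hc, div_pow, Real.sq_sqrt (by nlinarith)]
    field_simp
  set w : ℂ := 2 * Real.pi * z with hwdef
  -- from the vanishing, (lam2 * sin w)^2 = 1
  have hsin : ((lam2 : ℂ) * Complex.sin w) ^ 2 = 1 := by
    rw [mul_pow]
    linear_combination -heq
  -- hence normSq (sin w) = 1/lam2^2
  have hns : Complex.normSq (Complex.sin w) = 1 / lam2 ^ 2 := by
    have h1 : (Complex.normSq ((lam2 : ℂ) * Complex.sin w)) ^ 2 = 1 := by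
      rw [← map_pow Complex.normSq, hsin]; simp
    have h2 : Complex.normSq ((lam2 : ℂ) * Complex.sin w) = 1 := by
      nlinarith [Complex.normSq_nonneg ((lam2 : ℂ) * Complex.sin w)]
    rw [Complex.normSq_mul, Complex.normSq_ofReal] at h2
    field_simp at h2 ⊢
    linarith
  -- compute normSq (sin w) in terms of w.re, w.im
  set x : ℝ := w.re
  set y : ℝ := w.im
  have hkey : (Real.sin x * Real.cosh y) ^ 2 + (Real.cos x * Real.sinh y) ^ 2
      = 1 / lam2 ^ 2 := by
    rw [← hns, Complex.sin_eq]
    simp only [← Complex.ofReal_sin, ← Complex.ofReal_cos, ← Complex.ofReal_sinh,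
      ← Complex.ofReal_cosh, ← Complex.ofReal_mul, Complex.normSq_add_mul_I]
    rfl
  -- hence sinh y ^ 2 ≥ c ^ 2
  have hsinh : c ^ 2 ≤ Real.sinh y ^ 2 := by
    have h1 := Real.sin_sq_add_cos_sq x
    have h2 := Real.cosh_sq y
    nlinarith [sq_nonneg (Real.sin x), sq_nonneg (Real.cos x), sq_nonneg (Real.sinh y)]
  -- so c ≤ sinh |y|
  have habs : c ≤ Real.sinh |y| := by
    have h2 : c ^ 2 ≤ |Real.sinh y| ^ 2 := by rwa [_root_.sq_abs]
    calc c = Real.sqrt (c ^ 2) := (Real.sqrt_sq hc0).symm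
      _ ≤ Real.sqrt (|Real.sinh y| ^ 2) := Real.sqrt_le_sqrt h2
      _ = |Real.sinh y| := Real.sqrt_sq (abs_nonneg _)
      _ = Real.sinh |y| := Real.abs_sinh y
  -- so arsinh c ≤ |y|
  have harc : Real.arsinh c ≤ |y| := by
    calc Real.arsinh c ≤ Real.arsinh (Real.sinh |y|) := Real.arsinh_le_arsinh.2 habs
      _ = |y| := Real.arsinh_sinh _
  -- but |y| = 2π |z.im| < arsinh c
  have hy : y = 2 * Real.pi * z.im := by
    show (2 * (Real.pi : ℂ) * z).im = _
    simp
  have : |y| < Real.arsinh c := by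
    rw [hy, abs_mul, abs_of_pos (by positivity : (0:ℝ) < 2 * Real.pi)]
    calc 2 * Real.pi * |z.im| < 2 * Real.pi * ((1 / (2 * Real.pi)) * Real.arsinh c) := by
          apply mul_lt_mul_of_pos_left hz (by positivity)
      _ = Real.arsinh c := by field_simp
  linarith
end

section
/- Fix λ₂ ∈ (0,1) and λ₂' = √(1−λ₂²). Then ∫₀¹ log|λ₂ cos(2πθ) − i λ₂'| dθ = log((1+λ₂')/2). Consequently, for λ₁ ∈ (0,1), ∫₀¹ log|ρ₃(θ) ρ₂ ρ₁ ρ₀| dθ = log(λ₁²(1+λ₂')/2), where ρ₃(θ) = λ₂ cos(2πθ) − iλ₂', ρ₂ = ρ₀ = λ₁, ρ₁ = −i. -/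
open Real Complex

lemma circle_log_zero (a : ℂ) (ha : (Norm.norm (E := ℂ)) a < 1) :
    ∫ θ in (0:ℝ)..(2*Real.pi), Real.log ((Norm.norm (E := ℂ)) (1 - a * Complex.exp (θ * Complex.I))) = 0 := by
  set f : ℂ → ℂ := fun z => Complex.log (1 - a * z) with hf
  have hdiff : ∀ z ∈ Metric.closedBall (0:ℂ) 1, DifferentiableAt ℂ f z := by
    intro z hz
    simp only [Metric.mem_closedBall, dist_zero_right] at hz
    have h1 : (1 - a * z) ∈ Complex.slitPlane := by
      have : ‖-(a * z)‖ < 1 := by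
        simp only [norm_neg, norm_mul]
        calc ‖a‖ * ‖z‖ ≤ ‖a‖ * 1 := by
              exact mul_le_mul_of_nonneg_left hz (norm_nonneg a)
          _ < 1 := by simpa using ha
      simpa [sub_eq_add_neg] using Complex.mem_slitPlane_of_norm_lt_one this
    exact (Complex.differentiableAt_log h1).comp z (f := fun z => 1 - a * z) (by fun_prop)
  have hdc : DiffContOnCl ℂ f (Metric.ball (0:ℂ) 1) := by
    refine ⟨fun z hz => (hdiff z (Metric.ball_subset_closedBall hz)).differentiableWithinAt, ?_⟩
    refine ContinuousOn.mono ?_ (by rw [closure_ball (0:ℂ) one_ne_zero])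
    exact fun z hz => (hdiff z hz).continuousAt.continuousWithinAt
  have hmem : (0:ℂ) ∈ Metric.ball (0:ℂ) 1 := by simp
  have hC := hdc.circleIntegral_sub_inv_smul hmem
  have hf0 : f 0 = 0 := by simp [hf]
  rw [hf0, smul_zero] at hC
  -- unfold the circle integral
  rw [circleIntegral] at hC
  simp only [deriv_circleMap, circleMap, ofReal_one, one_mul, zero_add, sub_zero,
    smul_eq_mul] at hC
  have hC2 : (∫ θ in (0:ℝ)..(2*Real.pi), Complex.I * f (Complex.exp (θ * Complex.I))) = 0 := by
    rw [← hC]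
    apply intervalIntegral.integral_congr
    intro θ _
    have hne : Complex.exp (θ * Complex.I) ≠ 0 := Complex.exp_ne_zero _
    field_simp
  rw [intervalIntegral.integral_const_mul, mul_eq_zero] at hC2
  have hC3 : (∫ θ in (0:ℝ)..(2*Real.pi), f (Complex.exp (θ * Complex.I))) = 0 :=
    hC2.resolve_left Complex.I_ne_zero
  -- take real parts
  have hint : IntervalIntegrable (fun θ : ℝ => f (Complex.exp (θ * Complex.I))) MeasureTheory.volume 0 (2*Real.pi) := by
    apply Continuous.intervalIntegrable
    rw [continuous_iff_continuousAt]
    intro θ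
    have h1 : Complex.exp (↑θ * Complex.I) ∈ Metric.closedBall (0:ℂ) 1 := by
      simp [Metric.mem_closedBall, Complex.norm_exp_ofReal_mul_I]
    exact ((hdiff _ h1).continuousAt).comp (f := fun θ : ℝ => Complex.exp (θ * Complex.I)) (x := θ) (by fun_prop)
  have hre := Complex.reCLM.intervalIntegral_comp_comm hint
  rw [hC3, map_zero] at hre
  refine Eq.trans ?_ hre
  apply intervalIntegral.integral_congr
  intro θ _
  simp only [Complex.reCLM_apply, hf]
  exact (Complex.log_re _).symm


lemma one_sub_ne (a : ℂ) (ha : (Norm.norm (E := ℂ)) a < 1) (θ : ℝ) :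
    1 - a * Complex.exp (θ * Complex.I) ≠ 0 := by
  intro h
  have h2 : (Norm.norm (E := ℂ)) (a * Complex.exp (θ * Complex.I)) = 1 := by
    have : a * Complex.exp (θ * Complex.I) = 1 := by linear_combination -h
    rw [this]; simp
  rw [norm_mul, Complex.norm_exp_ofReal_mul_I, mul_one] at h2
  linarith

lemma cont_log (a : ℂ) (ha : (Norm.norm (E := ℂ)) a < 1) :
    Continuous fun θ : ℝ => Real.log ((Norm.norm (E := ℂ)) (1 - a * Complex.exp (θ * Complex.I))) := by
  apply Continuous.log
  · exact continuous_norm.comp (by fun_prop)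
  · intro θ
    simpa [sub_eq_zero] using one_sub_ne a ha θ

lemma circle_log_zero' (a : ℂ) (ha : (Norm.norm (E := ℂ)) a < 1) :
    ∫ θ in (0:ℝ)..1, Real.log ((Norm.norm (E := ℂ)) (1 - a * Complex.exp ((2*Real.pi*θ:ℝ) * Complex.I))) = 0 := by
  have h2pi : (2*Real.pi) ≠ 0 := by positivity
  have := intervalIntegral.integral_comp_mul_left
    (fun x : ℝ => Real.log ((Norm.norm (E := ℂ)) (1 - a * Complex.exp ((x:ℝ) * Complex.I))))
    (a := 0) (b := 1) (c := 2*Real.pi) h2pi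
  simp only [mul_zero, mul_one] at this
  rw [this, circle_log_zero a ha, smul_zero]


lemma abs_factor (lam2 c : ℝ) (h0 : 0 < lam2) (hc2 : c^2 = 1 - lam2^2) (hc0 : 0 < c) (x : ℝ) :
    (Norm.norm (E := ℂ)) ((lam2 * Real.cos x : ℝ) - (c : ℝ) * Complex.I)
      = ((1 + c) / 2)
        * (Norm.norm (E := ℂ)) (1 - (-Complex.I * ((lam2 / (1+c) : ℝ):ℂ)) * Complex.exp (x * Complex.I))
        * (Norm.norm (E := ℂ)) (1 - (Complex.I * (((1-c)/lam2 : ℝ):ℂ)) * Complex.exp (x * Complex.I)) := by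
  have hl2 : (lam2:ℂ) ≠ 0 := Complex.ofReal_ne_zero.2 h0.ne'
  have h1c : (0:ℝ) < 1 + c := by linarith
  have h1cC : ((1:ℂ) + c) ≠ 0 := by
    have : ((1+c:ℝ):ℂ) ≠ 0 := Complex.ofReal_ne_zero.2 h1c.ne'
    push_cast at this; exact this
  have hc2C : (c:ℂ)^2 = 1 - (lam2:ℂ)^2 := by exact_mod_cast congrArg (Complex.ofReal) hc2
  set E := Complex.exp (x * Complex.I) with hEdef
  have hE : E ≠ 0 := Complex.exp_ne_zero _
  have hEabs : (Norm.norm (E := ℂ)) E = 1 := Complex.norm_exp_ofReal_mul_I x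
  have hconjE : (starRingEnd ℂ) E = E⁻¹ := by
    rw [hEdef, ← Complex.exp_conj, ← Complex.exp_neg]
    congr 1
    simp [map_mul, Complex.conj_I]
  have h2c : 2 * Complex.cos (x:ℂ) = E + E⁻¹ := by
    rw [Complex.two_cos, hEdef, ← Complex.exp_neg]
    congr 2
    ring
  have key : ((lam2 * Real.cos x : ℝ):ℂ) - (c:ℝ) * Complex.I
      = ((lam2:ℂ)/2) * E⁻¹ * (E - Complex.I*(1+(c:ℂ))/lam2) * (E - Complex.I*((c:ℂ)-1)/lam2) := by
    push_cast
    have hcos : (Complex.cos (x:ℂ)) = (E + E⁻¹)/2 := by linear_combination h2c / 2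
    rw [hcos]
    field_simp
    linear_combination hc2C + (1 - (c:ℂ)^2) * Complex.I_sq
  rw [key]
  rw [norm_mul, norm_mul, norm_mul, norm_inv, hEabs]
  have habs1 : (Norm.norm (E := ℂ)) ((lam2:ℂ)/2) = lam2/2 := by
    rw [norm_div, Complex.norm_real, Real.norm_eq_abs, abs_of_pos h0]
    simp
  have e1 : (Norm.norm (E := ℂ)) (E - Complex.I*(1+(c:ℂ))/lam2)
      = ((1+c)/lam2) * (Norm.norm (E := ℂ)) (1 - (-Complex.I * ((lam2 / (1+c) : ℝ):ℂ)) * E) := by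
    have hfac : E - Complex.I*(1+(c:ℂ))/lam2
        = (((1+c)/lam2 : ℝ):ℂ) * (-Complex.I) * (1 - (-Complex.I * ((lam2 / (1+c) : ℝ):ℂ)) * E) := by
      push_cast
      field_simp
      linear_combination (E*(lam2:ℂ)) * Complex.I_sq
    rw [hfac, norm_mul, norm_mul, Complex.norm_real, Real.norm_eq_abs, abs_of_pos (by positivity)]
    simp
  have e2 : (Norm.norm (E := ℂ)) (E - Complex.I*((c:ℂ)-1)/lam2)
      = (Norm.norm (E := ℂ)) (1 - (Complex.I * (((1-c)/lam2 : ℝ):ℂ)) * E) := by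
    rw [← Complex.norm_conj]
    have hconj : (starRingEnd ℂ) (E - Complex.I*((c:ℂ)-1)/lam2)
        = E⁻¹ * (1 - (Complex.I * (((1-c)/lam2 : ℝ):ℂ)) * E) := by
      rw [map_sub, hconjE]
      push_cast
      simp only [map_div₀, map_mul, Complex.conj_I, Complex.conj_ofReal, map_sub, map_one]
      field_simp
      ring
    rw [hconj, norm_mul, norm_inv, hEabs]
    simp
  rw [habs1, e1, e2]
  generalize (Norm.norm (E := ℂ)) (1 - -Complex.I * ((lam2 / (1+c) : ℝ):ℂ) * E) = A
  generalize (Norm.norm (E := ℂ)) (1 - Complex.I * (((1-c)/lam2 : ℝ):ℂ) * E) = B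
  field_simp

/-- `∫₀¹ log|λ₂ cos(2πθ) - iλ₂'| dθ = log((1+λ₂')/2)`, and consequently
`∫₀¹ log|ρ₃(θ)ρ₂ρ₁ρ₀| dθ = log(λ₁²(1+λ₂')/2)` where `ρ₃(θ) = λ₂cos(2πθ) - iλ₂'`,
`ρ₂ = ρ₀ = λ₁`, `ρ₁ = -i`. -/
theorem stmt14 (lam1 lam2 : ℝ) (h1 : lam1 ∈ Set.Ioo (0:ℝ) 1) (h2 : lam2 ∈ Set.Ioo (0:ℝ) 1) :
    (∫ θ in (0:ℝ)..1,
        Real.log ((Norm.norm (E := ℂ))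
          ((lam2 * Real.cos (2 * Real.pi * θ) : ℝ) - (Real.sqrt (1 - lam2^2) : ℝ) * Complex.I)))
      = Real.log ((1 + Real.sqrt (1 - lam2^2)) / 2) ∧
    (∫ θ in (0:ℝ)..1,
        Real.log ((Norm.norm (E := ℂ))
          ((((lam2 * Real.cos (2 * Real.pi * θ) : ℝ) - (Real.sqrt (1 - lam2^2) : ℝ) * Complex.I)
              * (lam1 : ℂ)) * (-Complex.I) * (lam1 : ℂ))))
      = Real.log (lam1^2 * (1 + Real.sqrt (1 - lam2^2)) / 2) := by
  obtain ⟨hl1, hl1'⟩ := h1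
  obtain ⟨hl2, hl2'⟩ := h2
  set c : ℝ := Real.sqrt (1 - lam2^2) with hcdef
  have hpos : (0:ℝ) < 1 - lam2^2 := by nlinarith
  have hc2 : c^2 = 1 - lam2^2 := Real.sq_sqrt hpos.le
  have hc0 : 0 < c := Real.sqrt_pos.2 hpos
  have hc1 : c < 1 := by nlinarith
  have h1c : (0:ℝ) < 1 + c := by linarith
  have hsum : 1 < lam2 + c := by nlinarith [mul_pos hl2 hc0]
  -- the two "small" parameters
  set ap : ℂ := -Complex.I * ((lam2 / (1+c) : ℝ):ℂ) with hapdef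
  set am : ℂ := Complex.I * (((1-c)/lam2 : ℝ):ℂ) with hamdef
  have hap : (Norm.norm (E := ℂ)) ap < 1 := by
    rw [hapdef]
    rw [norm_mul]
    simp only [norm_neg, Complex.norm_I, Complex.norm_real, Real.norm_eq_abs, one_mul]
    rw [_root_.abs_of_pos (by positivity)]
    rw [div_lt_one h1c]
    linarith
  have ham : (Norm.norm (E := ℂ)) am < 1 := by
    rw [hamdef, norm_mul]
    simp only [Complex.norm_I, Complex.norm_real, Real.norm_eq_abs, one_mul]
    rw [_root_.abs_of_nonneg (div_nonneg (by linarith) hl2.le), div_lt_one hl2]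
    linarith
  have hintp : IntervalIntegrable
      (fun θ : ℝ => Real.log ((Norm.norm (E := ℂ)) (1 - ap * Complex.exp ((2*Real.pi*θ:ℝ) * Complex.I))))
      MeasureTheory.volume 0 1 :=
    (((cont_log ap hap).comp (by fun_prop : Continuous fun θ : ℝ => 2*Real.pi*θ))).intervalIntegrable 0 1
  have hintm : IntervalIntegrable
      (fun θ : ℝ => Real.log ((Norm.norm (E := ℂ)) (1 - am * Complex.exp ((2*Real.pi*θ:ℝ) * Complex.I))))
      MeasureTheory.volume 0 1 :=
    (((cont_log am ham).comp (by fun_prop : Continuous fun θ : ℝ => 2*Real.pi*θ))).intervalIntegrable 0 1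
  have hrw : (fun θ : ℝ => Real.log ((Norm.norm (E := ℂ))
        (((lam2 * Real.cos (2*Real.pi*θ) : ℝ):ℂ) - (c:ℝ) * Complex.I)))
      = fun θ : ℝ => Real.log ((1+c)/2)
        + Real.log ((Norm.norm (E := ℂ)) (1 - ap * Complex.exp ((2*Real.pi*θ:ℝ) * Complex.I)))
        + Real.log ((Norm.norm (E := ℂ)) (1 - am * Complex.exp ((2*Real.pi*θ:ℝ) * Complex.I))) := by
    funext θ
    rw [abs_factor lam2 c hl2 hc2 hc0 (2*Real.pi*θ), ← hapdef, ← hamdef]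
    rw [Real.log_mul (mul_ne_zero (by positivity)
        (norm_ne_zero_iff.2 (one_sub_ne ap hap _))) (norm_ne_zero_iff.2 (one_sub_ne am ham _)),
      Real.log_mul (by positivity) (norm_ne_zero_iff.2 (one_sub_ne ap hap _))]
  have P1 : (∫ θ in (0:ℝ)..1, Real.log ((Norm.norm (E := ℂ))
        (((lam2 * Real.cos (2*Real.pi*θ) : ℝ):ℂ) - (c:ℝ) * Complex.I))) = Real.log ((1+c)/2) := by
    rw [hrw, intervalIntegral.integral_add (intervalIntegrable_const.add hintp) hintm,
      intervalIntegral.integral_add intervalIntegrable_const hintp,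
      circle_log_zero' ap hap, circle_log_zero' am ham, intervalIntegral.integral_const]
    simp
  refine ⟨P1, ?_⟩
  have hintρ : IntervalIntegrable (fun θ : ℝ => Real.log ((Norm.norm (E := ℂ))
      (((lam2 * Real.cos (2*Real.pi*θ) : ℝ):ℂ) - (c:ℝ) * Complex.I))) MeasureTheory.volume 0 1 := by
    rw [hrw]
    exact (intervalIntegrable_const.add hintp).add hintm
  have hρne : ∀ θ : ℝ, (((lam2 * Real.cos (2*Real.pi*θ) : ℝ):ℂ) - (c:ℝ) * Complex.I) ≠ 0 := by
    intro θ h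
    have h2 := congrArg Complex.im h
    simp only [Complex.sub_im, Complex.ofReal_im, Complex.mul_im, Complex.I_im, Complex.I_re,
      Complex.ofReal_re, Complex.zero_im, mul_one, mul_zero, add_zero, zero_sub] at h2
    linarith
  have hrw2 : (fun θ : ℝ => Real.log ((Norm.norm (E := ℂ))
        (((((lam2 * Real.cos (2*Real.pi*θ) : ℝ):ℂ) - (c:ℝ) * Complex.I) * (lam1:ℂ)) * (-Complex.I) * (lam1:ℂ))))
      = fun θ : ℝ => Real.log (lam1^2) + Real.log ((Norm.norm (E := ℂ))
        (((lam2 * Real.cos (2*Real.pi*θ) : ℝ):ℂ) - (c:ℝ) * Complex.I)) := by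
    funext θ
    have habs : (Norm.norm (E := ℂ))
        (((((lam2 * Real.cos (2*Real.pi*θ) : ℝ):ℂ) - (c:ℝ) * Complex.I) * (lam1:ℂ)) * (-Complex.I) * (lam1:ℂ))
        = lam1^2 * (Norm.norm (E := ℂ)) (((lam2 * Real.cos (2*Real.pi*θ) : ℝ):ℂ) - (c:ℝ) * Complex.I) := by
      rw [norm_mul, norm_mul, norm_mul]
      simp only [norm_neg, Complex.norm_I, Complex.norm_real, Real.norm_eq_abs]
      rw [abs_of_pos hl1]
      ring
    rw [habs, Real.log_mul (by positivity) (norm_ne_zero_iff.2 (hρne θ))]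
  rw [hrw2, intervalIntegral.integral_add intervalIntegrable_const hintρ, P1,
    intervalIntegral.integral_const]
  simp only [sub_zero, one_smul, smul_eq_mul, one_mul]
  rw [← Real.log_mul (by positivity) (by positivity), mul_div_assoc]
end
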